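/- Let H and B be symmetric d×d matrices with ‖B − H‖ ≤ ε_B, suppose λ_min(H) ≤ −ε_H with ε_H > ε_B > 0, and let σ > 0. If s ∈ ℝ^d, s ≠ 0, satisfies ⟨s, H s⟩ ≤ λ_min(H)‖s‖² and ⟨s, B s⟩ + σ‖s‖³ ≥ 0, then σ‖s‖ ≥ ε_H − ε_B, and consequently (σ/6)‖s‖³ ≥ (ε_H − ε_B)³/(6σ²). -/
import Mathlib


open RealInnerProductSpace

/-- The smallest eigenvalue of a (self-adjoint) operator on `ℝ^d`, expressed as the
infimum of the Rayleigh quotient over the unit sphere. -/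
noncomputable def lambdaMin {d : ℕ}
    (H : EuclideanSpace ℝ (Fin d) →L[ℝ] EuclideanSpace ℝ (Fin d)) : ℝ :=
  sInf ((fun s => ⟪s, H s⟫) '' {s : EuclideanSpace ℝ (Fin d) | ‖s‖ = 1})

/-- lower bound `σ‖s‖ ≥ ε_H − ε_B` in the negative-curvature case of
the SARC analysis, and the resulting cubic decrease bound. -/
theorem stmt_13 {d : ℕ}
    (H B : EuclideanSpace ℝ (Fin d) →L[ℝ] EuclideanSpace ℝ (Fin d))
    (hHsym : IsSelfAdjoint H) (hBsym : IsSelfAdjoint B)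
    (εB εH σ : ℝ) (hεB : 0 < εB) (hεH : εB < εH) (hσ : 0 < σ)
    (hBH : ‖B - H‖ ≤ εB) (hlam : lambdaMin H ≤ -εH)
    (s : EuclideanSpace ℝ (Fin d)) (hs : s ≠ 0)
    (hcurv : ⟪s, H s⟫ ≤ lambdaMin H * ‖s‖ ^ 2)
    (hterm : 0 ≤ ⟪s, B s⟫ + σ * ‖s‖ ^ 3) :
    εH - εB ≤ σ * ‖s‖ ∧ (εH - εB) ^ 3 / (6 * σ ^ 2) ≤ (σ / 6) * ‖s‖ ^ 3 := by

  have hn : 0 < ‖s‖ := norm_pos_iff.mpr hs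
  have hdiff : ⟪s, B s⟫ - ⟪s, H s⟫ ≤ εB * ‖s‖ ^ 2 := by
    have h1 : ⟪s, B s⟫ - ⟪s, H s⟫ = ⟪s, (B - H) s⟫ := by
      simp [inner_sub_right]
    rw [h1]
    calc ⟪s, (B - H) s⟫ ≤ ‖s‖ * ‖(B - H) s‖ := real_inner_le_norm _ _
      _ ≤ ‖s‖ * (‖B - H‖ * ‖s‖) := by
          exact mul_le_mul_of_nonneg_left ((B - H).le_opNorm s) (norm_nonneg s)
      _ ≤ εB * ‖s‖ ^ 2 := by nlinarith [norm_nonneg s]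
  have hB : ⟪s, B s⟫ ≤ (εB - εH) * ‖s‖ ^ 2 := by
    have : lambdaMin H * ‖s‖ ^ 2 ≤ -εH * ‖s‖ ^ 2 :=
      mul_le_mul_of_nonneg_right hlam (by positivity)
    nlinarith
  have key : εH - εB ≤ σ * ‖s‖ := by
    nlinarith [mul_pos hn hn, mul_pos (mul_pos hn hn) hn]
  refine ⟨key, ?_⟩
  rw [div_le_iff₀ (by positivity)]
  have hcube : (εH - εB) ^ 3 ≤ (σ * ‖s‖) ^ 3 :=
    pow_le_pow_left₀ (by linarith) key 3
  nlinarith [hcube]
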